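/- Let d ≥ 1 and let I ⊂ ℤ^d∖{0} be a finite set which is not a generator, i.e., there exists n ∈ ℤ^d∖{0} which is not a ℤ-linear combination of elements of I. Then for every g ∈ H_∞(I), ∫_{[0,2π]^d} g(x) cos⟨x,n⟩ dx = 0 and ∫_{[0,2π]^d} g(x) sin⟨x,n⟩ dx = 0; in particular H_∞(I) is not uniformly dense in the continuous (2πℤ^d)-periodic functions ℝ^d → ℝ. -/

import Mathlib

open Real MeasureTheory

/-- ⟨x, m⟩ = ∑ x_j m_j for x ∈ ℝ^d, m ∈ ℤ^d. -/
noncomputable def ip (d : ℕ) (x : Fin d → ℝ) (m : Fin d → ℤ) : ℝ :=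
  ∑ j, x j * (m j : ℝ)

/-- Integer inner product on ℤ^d. -/
def ipZ (d : ℕ) (m l : Fin d → ℤ) : ℤ := ∑ j, m j * l j

/-- c_m(x) = cos⟨x,m⟩. -/
noncomputable def cmap (d : ℕ) (m : Fin d → ℤ) : (Fin d → ℝ) → ℝ :=
  fun x => Real.cos (ip d x m)

/-- s_m(x) = sin⟨x,m⟩. -/
noncomputable def smap (d : ℕ) (m : Fin d → ℤ) : (Fin d → ℝ) → ℝ :=
  fun x => Real.sin (ip d x m)

/-- B(φ)(x) = ∑_j (∂_{x_j} φ(x))². -/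
noncomputable def Bop (d : ℕ) (φ : (Fin d → ℝ) → ℝ) : (Fin d → ℝ) → ℝ :=
  fun x => ∑ j, (fderiv ℝ φ x (Pi.single j 1)) ^ 2

/-- Functions representable as θ₀ − ∑_{j=1}^n B(θ_j) with θ's in H, n ≥ 1. -/
noncomputable def BRep (d : ℕ) (H : Set ((Fin d → ℝ) → ℝ)) : Set ((Fin d → ℝ) → ℝ) :=
  { f | ∃ n : ℕ, 1 ≤ n ∧ ∃ θ₀ ∈ H, ∃ θ : Fin n → (Fin d → ℝ) → ℝ,
      (∀ j, θ j ∈ H) ∧ f = θ₀ - ∑ j, Bop d (θ j) }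

/-- F(H): f such that both f and −f are representable. -/
noncomputable def Fop (d : ℕ) (H : Set ((Fin d → ℝ) → ℝ)) : Set ((Fin d → ℝ) → ℝ) :=
  { f | f ∈ BRep d H ∧ -f ∈ BRep d H }

/-- H(I): span of {1} ∪ {c_k, s_k : k ∈ I}. -/
noncomputable def H0 (d : ℕ) (I : Finset (Fin d → ℤ)) : Set ((Fin d → ℝ) → ℝ) :=
  ↑(Submodule.span ℝ
      ({fun _ => (1:ℝ)} ∪ ⋃ k ∈ (I : Set (Fin d → ℤ)), {cmap d k, smap d k}))

noncomputable def HSeq (d : ℕ) (I : Finset (Fin d → ℤ)) : ℕ → Set ((Fin d → ℝ) → ℝ)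
  | 0 => H0 d I
  | j + 1 => Fop d (HSeq d I j)

/-- H_∞(I) = ⋃_j H_j(I). -/
noncomputable def Hinf (d : ℕ) (I : Finset (Fin d → ℤ)) : Set ((Fin d → ℝ) → ℝ) :=
  ⋃ j, HSeq d I j

/-- I generates ℤ^d over ℤ. -/
def IsGenerator (d : ℕ) (I : Finset (Fin d → ℤ)) : Prop :=
  ∀ n : Fin d → ℤ, ∃ a : (Fin d → ℤ) → ℤ, n = ∑ k ∈ I, a k • k

/-- Connectedness condition of Proposition 2.5. -/
def ConnectedSet (d : ℕ) (I : Finset (Fin d → ℤ)) : Prop :=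
  ∀ l ∈ I, ∀ m ∈ I, ∃ k : ℕ, ∃ n : Fin (k + 1) → (Fin d → ℤ),
    (∀ j, n j ∈ I) ∧ ipZ d l (n 0) ≠ 0 ∧
    (∀ j : Fin k, ipZ d (n j.castSucc) (n j.succ) ≠ 0) ∧
    ipZ d (n (Fin.last k)) m ≠ 0

/-- (2πℤ^d)-periodicity for real-valued functions. -/
def Periodic2pi (d : ℕ) (f : (Fin d → ℝ) → ℝ) : Prop :=
  ∀ (x : Fin d → ℝ) (k : Fin d → ℤ), f (x + fun j => 2 * Real.pi * (k j : ℝ)) = f x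
def box (d : ℕ) : Set (Fin d → ℝ) := Set.Icc 0 (fun _ => 2 * π)

lemma oneD (k : ℤ) (hk : k ≠ 0) :
    ∫ t in Set.Icc (0:ℝ) (2*π), Complex.exp (t * k * Complex.I) = 0 := by
  rw [MeasureTheory.integral_Icc_eq_integral_Ioc,
    ← intervalIntegral.integral_of_le (by positivity)]
  have : ∀ t : ℝ, Complex.exp (t * k * Complex.I) = Complex.exp ((k * Complex.I) * t) := by
    intro t; ring_nf
  simp_rw [this]
  rw [integral_exp_mul_complex (by simp [hk, Complex.ext_iff])]
  have h2 : (k : ℂ) * Complex.I * (2 * π : ℝ) = k * (2 * π * Complex.I) := by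
    push_cast; ring
  rw [h2, Complex.exp_int_mul_two_pi_mul_I]
  simp

lemma boxExp (d : ℕ) (k : Fin d → ℤ) (hk : k ≠ 0) :
    ∫ x in box d, Complex.exp ((ip d x k : ℝ) * Complex.I) = 0 := by
  obtain ⟨j0, hj0⟩ : ∃ j, k j ≠ 0 := by
    by_contra h; push_neg at h; exact hk (funext h)
  have hbox : box d = Set.pi Set.univ fun _ => Set.Icc (0:ℝ) (2*π) := by
    rw [Set.pi_univ_Icc]; rfl
  have hprod : ∀ x : Fin d → ℝ,
      Complex.exp ((ip d x k : ℝ) * Complex.I)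
        = ∏ j, (fun t : ℝ => Complex.exp (t * (k j) * Complex.I)) (x j) := by
    intro x
    rw [← Complex.exp_sum]
    congr 1
    simp only [ip]
    push_cast
    rw [Finset.sum_mul]
  have hind : ∀ x : Fin d → ℝ,
      (box d).indicator (fun x => Complex.exp ((ip d x k : ℝ) * Complex.I)) x
        = ∏ j, (Set.Icc (0:ℝ) (2*π)).indicator
            (fun t : ℝ => Complex.exp (t * (k j) * Complex.I)) (x j) := by
    intro x
    by_cases hx : x ∈ box d
    · rw [Set.indicator_of_mem hx, hprod]
      rw [hbox] at hx
      refine Finset.prod_congr rfl fun j _ => ?_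
      have := hx j (Set.mem_univ j)
      rw [Set.indicator_of_mem (by exact this)]
    · rw [Set.indicator_of_notMem hx]
      rw [hbox] at hx
      simp only [Set.mem_pi, Set.mem_univ, forall_true_left] at hx
      push_neg at hx
      obtain ⟨j, hj⟩ := hx
      exact (Finset.prod_eq_zero (Finset.mem_univ j)
        (Set.indicator_of_notMem hj _)).symm
  have hmeas : MeasurableSet (box d) := measurableSet_Icc
  rw [← MeasureTheory.integral_indicator hmeas]
  simp_rw [hind]
  rw [MeasureTheory.volume_pi, MeasureTheory.integral_fintype_prod_eq_prod
    (fun j => (Set.Icc (0:ℝ) (2*π)).indicator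
      (fun t : ℝ => Complex.exp (t * (k j) * Complex.I)))]
  apply Finset.prod_eq_zero (Finset.mem_univ j0)
  rw [MeasureTheory.integral_indicator measurableSet_Icc]
  exact oneD (k j0) hj0

lemma ip_cont (d : ℕ) (m : Fin d → ℤ) : Continuous fun x : Fin d → ℝ => ip d x m := by
  unfold ip
  exact continuous_finset_sum _ fun j _ => (continuous_apply j).mul continuous_const

lemma ip_zero (d : ℕ) (x : Fin d → ℝ) : ip d x 0 = 0 := by simp [ip]

lemma ip_add (d : ℕ) (x : Fin d → ℝ) (m l : Fin d → ℤ) :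
    ip d x (m + l) = ip d x m + ip d x l := by
  simp only [ip, ← Finset.sum_add_distrib, Pi.add_apply, Int.cast_add]
  congr 1; funext j; ring

lemma ip_neg (d : ℕ) (x : Fin d → ℝ) (m : Fin d → ℤ) : ip d x (-m) = -ip d x m := by
  simp [ip, ← Finset.sum_neg_distrib]

lemma ip_sub (d : ℕ) (x : Fin d → ℝ) (m l : Fin d → ℤ) :
    ip d x (m - l) = ip d x m - ip d x l := by
  rw [sub_eq_add_neg, ip_add, ip_neg]; ring

lemma expIntegrable (d : ℕ) (k : Fin d → ℤ) :
    IntegrableOn (fun x : Fin d → ℝ => Complex.exp ((ip d x k : ℝ) * Complex.I))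
      (box d) := by
  apply Continuous.integrableOn_Icc
  exact Complex.continuous_exp.comp
    ((Complex.continuous_ofReal.comp (ip_cont d k)).mul continuous_const)

lemma boxCos (d : ℕ) (k : Fin d → ℤ) (hk : k ≠ 0) :
    ∫ x in box d, Real.cos (ip d x k) = 0 := by
  have h := boxExp d k hk
  have : ∀ x : Fin d → ℝ, Real.cos (ip d x k)
      = (Complex.exp ((ip d x k : ℝ) * Complex.I)).re := by
    intro x; rw [Complex.exp_ofReal_mul_I_re]
  simp_rw [this]
  have h2 := integral_re (μ := volume.restrict (box d)) (𝕜 := ℂ) (expIntegrable d k)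
  simp only [RCLike.re_to_complex] at h2
  rw [h2, h]
  simp

lemma boxSin (d : ℕ) (k : Fin d → ℤ) : ∫ x in box d, Real.sin (ip d x k) = 0 := by
  by_cases hk : k = 0
  · subst hk; simp_rw [ip_zero]; simp
  have h := boxExp d k hk
  have : ∀ x : Fin d → ℝ, Real.sin (ip d x k)
      = (Complex.exp ((ip d x k : ℝ) * Complex.I)).im := by
    intro x; rw [Complex.exp_ofReal_mul_I_im]
  simp_rw [this]
  have h2 := integral_im (μ := volume.restrict (box d)) (𝕜 := ℂ) (expIntegrable d k)
  simp only [RCLike.im_to_complex] at h2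
  rw [h2, h]
  simp

/-! derivative layer -/

noncomputable def ipL (d : ℕ) (m : Fin d → ℤ) : (Fin d → ℝ) →L[ℝ] ℝ :=
  ∑ j, (m j : ℝ) • ContinuousLinearMap.proj j

lemma ipL_apply (d : ℕ) (m : Fin d → ℤ) (x : Fin d → ℝ) : ipL d m x = ip d x m := by
  simp [ipL, ip, ContinuousLinearMap.sum_apply, mul_comm]

lemma ipL_single (d : ℕ) (m : Fin d → ℤ) (j : Fin d) :
    ipL d m (Pi.single j 1) = (m j : ℝ) := by
  simp only [ipL, ContinuousLinearMap.sum_apply, ContinuousLinearMap.smul_apply,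
    ContinuousLinearMap.proj_apply]
  rw [Finset.sum_eq_single j]
  · simp
  · intro b _ hb
    rw [Pi.single_eq_of_ne hb]; simp
  · simp

noncomputable def bfun (d : ℕ) (m : Fin d → ℤ) (b : Bool) : (Fin d → ℝ) → ℝ :=
  if b then cmap d m else smap d m

noncomputable def dco (d : ℕ) (m : Fin d → ℤ) (b : Bool) : (Fin d → ℝ) → ℝ :=
  fun x => if b then -Real.sin (ip d x m) else Real.cos (ip d x m)

lemma hasFD_bfun (d : ℕ) (m : Fin d → ℤ) (b : Bool) (x : Fin d → ℝ) :
    HasFDerivAt (bfun d m b) (dco d m b x • ipL d m) x := by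
  have h1 : HasFDerivAt (fun x => ipL d m x) (ipL d m) x := (ipL d m).hasFDerivAt
  cases b
  · have h2 : HasDerivAt Real.sin (Real.cos (ipL d m x)) (ipL d m x) :=
      Real.hasDerivAt_sin _
    have h3 := h2.comp_hasFDerivAt x h1
    have he : bfun d m false = Real.sin ∘ ⇑(ipL d m) := by
      funext y; simp [bfun, smap, ipL_apply, Function.comp]
    rw [he]
    have : dco d m false x = Real.cos ((ipL d m) x) := by simp [dco, ipL_apply]
    rw [this]; exact h3
  · have h2 : HasDerivAt Real.cos (-Real.sin (ipL d m x)) (ipL d m x) :=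
      Real.hasDerivAt_cos _
    have h3 := h2.comp_hasFDerivAt x h1
    have he : bfun d m true = Real.cos ∘ ⇑(ipL d m) := by
      funext y; simp [bfun, cmap, ipL_apply, Function.comp]
    rw [he]
    have : dco d m true x = -Real.sin ((ipL d m) x) := by simp [dco, ipL_apply]
    rw [this]; exact h3

/-! the module of trig polynomials with frequencies in L -/

def Bset (d : ℕ) (L : Submodule ℤ (Fin d → ℤ)) : Set ((Fin d → ℝ) → ℝ) :=
  {f | ∃ m ∈ L, f = cmap d m ∨ f = smap d m}

noncomputable def SS (d : ℕ) (L : Submodule ℤ (Fin d → ℤ)) :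
    Submodule ℝ ((Fin d → ℝ) → ℝ) :=
  Submodule.span ℝ (Bset d L)

lemma cmap_mem {d : ℕ} {L : Submodule ℤ (Fin d → ℤ)} {m : Fin d → ℤ} (hm : m ∈ L) :
    cmap d m ∈ SS d L :=
  Submodule.subset_span ⟨m, hm, Or.inl rfl⟩

lemma smap_mem {d : ℕ} {L : Submodule ℤ (Fin d → ℤ)} {m : Fin d → ℤ} (hm : m ∈ L) :
    smap d m ∈ SS d L :=
  Submodule.subset_span ⟨m, hm, Or.inr rfl⟩

lemma one_mem_SS {d : ℕ} {L : Submodule ℤ (Fin d → ℤ)} :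
    (fun _ : Fin d → ℝ => (1:ℝ)) ∈ SS d L := by
  have : (fun _ : Fin d → ℝ => (1:ℝ)) = cmap d 0 := by
    funext x; simp [cmap, ip_zero]
  rw [this]; exact cmap_mem (zero_mem L)

lemma sinsin_mem {d : ℕ} {L : Submodule ℤ (Fin d → ℤ)} {m l : Fin d → ℤ}
    (hm : m ∈ L) (hl : l ∈ L) :
    (fun x => Real.sin (ip d x m) * Real.sin (ip d x l)) ∈ SS d L := by
  have : (fun x => Real.sin (ip d x m) * Real.sin (ip d x l))
      = (1/2 : ℝ) • cmap d (m - l) - (1/2 : ℝ) • cmap d (m + l) := by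
    funext x
    simp only [Pi.sub_apply, Pi.smul_apply, smul_eq_mul, cmap, ip_sub, ip_add,
      Real.cos_sub, Real.cos_add]
    ring
  rw [this]
  exact sub_mem (Submodule.smul_mem _ _ (cmap_mem (sub_mem hm hl)))
    (Submodule.smul_mem _ _ (cmap_mem (add_mem hm hl)))

lemma coscos_mem {d : ℕ} {L : Submodule ℤ (Fin d → ℤ)} {m l : Fin d → ℤ}
    (hm : m ∈ L) (hl : l ∈ L) :
    (fun x => Real.cos (ip d x m) * Real.cos (ip d x l)) ∈ SS d L := by
  have : (fun x => Real.cos (ip d x m) * Real.cos (ip d x l))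
      = (1/2 : ℝ) • cmap d (m - l) + (1/2 : ℝ) • cmap d (m + l) := by
    funext x
    simp only [Pi.add_apply, Pi.smul_apply, smul_eq_mul, cmap, ip_sub, ip_add,
      Real.cos_sub, Real.cos_add]
    ring
  rw [this]
  exact add_mem (Submodule.smul_mem _ _ (cmap_mem (sub_mem hm hl)))
    (Submodule.smul_mem _ _ (cmap_mem (add_mem hm hl)))

lemma sincos_mem {d : ℕ} {L : Submodule ℤ (Fin d → ℤ)} {m l : Fin d → ℤ}
    (hm : m ∈ L) (hl : l ∈ L) :
    (fun x => Real.sin (ip d x m) * Real.cos (ip d x l)) ∈ SS d L := by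
  have : (fun x => Real.sin (ip d x m) * Real.cos (ip d x l))
      = (1/2 : ℝ) • smap d (m + l) + (1/2 : ℝ) • smap d (m - l) := by
    funext x
    simp only [Pi.add_apply, Pi.smul_apply, smul_eq_mul, smap, ip_sub, ip_add,
      Real.sin_add, Real.sin_sub]
    ring
  rw [this]
  exact add_mem (Submodule.smul_mem _ _ (smap_mem (add_mem hm hl)))
    (Submodule.smul_mem _ _ (smap_mem (sub_mem hm hl)))

lemma dco_prod_mem {d : ℕ} {L : Submodule ℤ (Fin d → ℤ)} {m l : Fin d → ℤ}
    (hm : m ∈ L) (hl : l ∈ L) (b b' : Bool) :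
    (fun x => dco d m b x * dco d l b' x) ∈ SS d L := by
  cases b <;> cases b' <;> simp only [dco, reduceIte, Bool.false_eq_true, if_false]
  · exact coscos_mem hm hl
  · have : (fun x => Real.cos (ip d x m) * -Real.sin (ip d x l))
        = -fun x => Real.sin (ip d x l) * Real.cos (ip d x m) := by
      funext x; simp; ring
    rw [this]; exact neg_mem (sincos_mem hl hm)
  · have : (fun x => -Real.sin (ip d x m) * Real.cos (ip d x l))
        = -fun x => Real.sin (ip d x m) * Real.cos (ip d x l) := by
      funext x; simp
    rw [this]; exact neg_mem (sincos_mem hm hl)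
  · have : (fun x => -Real.sin (ip d x m) * -Real.sin (ip d x l))
        = fun x => Real.sin (ip d x m) * Real.sin (ip d x l) := by
      funext x; ring_nf
    rw [this]; exact sinsin_mem hm hl

lemma Bop_mem {d : ℕ} {L : Submodule ℤ (Fin d → ℤ)} {θ : (Fin d → ℝ) → ℝ}
    (hθ : θ ∈ SS d L) : Bop d θ ∈ SS d L := by
  rw [SS, Submodule.mem_span_set] at hθ
  obtain ⟨c, hsupp, hθ⟩ := hθ
  set t := c.support with ht
  have key : ∀ f ∈ t, ∃ m, m ∈ L ∧ ∃ b : Bool, f = bfun d m b := by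
    intro f hf
    obtain ⟨m, hm, hfm⟩ := hsupp hf
    exact ⟨m, hm, hfm.elim (fun h => ⟨true, by simp [bfun, h]⟩)
      (fun h => ⟨false, by simp [bfun, h]⟩)⟩
  choose! M hML B hB using key
  have hθ' : θ = fun x => ∑ f ∈ t, c f • bfun d (M f) (B f) x := by
    funext x
    rw [← hθ, Finsupp.sum, Finset.sum_apply]
    exact Finset.sum_congr rfl fun f hf => by rw [← hB f hf]; rfl
  have hD : ∀ x : Fin d → ℝ, HasFDerivAt θ
      (∑ f ∈ t, (c f * dco d (M f) (B f) x) • ipL d (M f)) x := by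
    intro x
    have hsum : (∑ f ∈ t, (c f * dco d (M f) (B f) x) • ipL d (M f))
        = ∑ f ∈ t, c f • (dco d (M f) (B f) x • ipL d (M f)) :=
      Finset.sum_congr rfl fun f _ => (smul_smul _ _ _).symm
    rw [hθ', hsum]
    exact HasFDerivAt.fun_sum fun f _ => (hasFD_bfun d (M f) (B f) x).const_smul (c f)
  have claim : Bop d θ = ∑ f ∈ t, ∑ g ∈ t,
      (c f * c g * (ipZ d (M f) (M g) : ℝ)) •
        (fun x => dco d (M f) (B f) x * dco d (M g) (B g) x) := by
    funext x
    simp only [Bop, Finset.sum_apply, Pi.smul_apply, smul_eq_mul]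
    rw [show fderiv ℝ θ x = ∑ f ∈ t, (c f * dco d (M f) (B f) x) • ipL d (M f) from
      (hD x).fderiv]
    simp only [ContinuousLinearMap.coe_sum', Finset.sum_apply,
      ContinuousLinearMap.coe_smul', Pi.smul_apply, ipL_single, smul_eq_mul]
    simp_rw [pow_two, Finset.sum_mul_sum]
    rw [Finset.sum_comm]
    refine Finset.sum_congr rfl fun f hf => ?_
    rw [Finset.sum_comm]
    refine Finset.sum_congr rfl fun g hg => ?_
    rw [ipZ]
    push_cast
    simp only [Finset.mul_sum, Finset.sum_mul]
    exact Finset.sum_congr rfl fun j _ => by ring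
  rw [claim]
  exact Submodule.sum_mem _ fun f hf => Submodule.sum_mem _ fun g hg =>
    Submodule.smul_mem _ _ (dco_prod_mem (hML f hf) (hML g hg) (B f) (B g))

/-! paired integral lemmas -/

lemma cos_ip_cont (d : ℕ) (k : Fin d → ℤ) :
    Continuous fun x => Real.cos (ip d x k) := Real.continuous_cos.comp (ip_cont d k)

lemma sin_ip_cont (d : ℕ) (k : Fin d → ℤ) :
    Continuous fun x => Real.sin (ip d x k) := Real.continuous_sin.comp (ip_cont d k)


lemma contIntOn {d : ℕ} {f : (Fin d → ℝ) → ℝ} (h : Continuous f) :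
    IntegrableOn f (box d) := h.integrableOn_Icc

lemma int_coscos (d : ℕ) (m n : Fin d → ℤ) (h1 : m - n ≠ 0) (h2 : m + n ≠ 0) :
    ∫ x in box d, Real.cos (ip d x m) * Real.cos (ip d x n) = 0 := by
  have h : ∀ x : Fin d → ℝ, Real.cos (ip d x m) * Real.cos (ip d x n)
      = (1/2) * Real.cos (ip d x (m - n)) + (1/2) * Real.cos (ip d x (m + n)) := by
    intro x; rw [ip_sub, ip_add, Real.cos_sub, Real.cos_add]; ring
  simp_rw [h]
  rw [MeasureTheory.integral_add
      ((contIntOn (continuous_const.fun_mul (cos_ip_cont d (m-n)))))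
      ((contIntOn (continuous_const.fun_mul (cos_ip_cont d (m+n))))),
    MeasureTheory.integral_const_mul, MeasureTheory.integral_const_mul,
    boxCos d _ h1, boxCos d _ h2]
  ring

lemma int_sinsin (d : ℕ) (m n : Fin d → ℤ) (h1 : m - n ≠ 0) (h2 : m + n ≠ 0) :
    ∫ x in box d, Real.sin (ip d x m) * Real.sin (ip d x n) = 0 := by
  have h : ∀ x : Fin d → ℝ, Real.sin (ip d x m) * Real.sin (ip d x n)
      = (1/2) * Real.cos (ip d x (m - n)) - (1/2) * Real.cos (ip d x (m + n)) := by
    intro x; rw [ip_sub, ip_add, Real.cos_sub, Real.cos_add]; ring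
  simp_rw [h]
  rw [MeasureTheory.integral_sub
      ((contIntOn (continuous_const.fun_mul (cos_ip_cont d (m-n)))))
      ((contIntOn (continuous_const.fun_mul (cos_ip_cont d (m+n))))),
    MeasureTheory.integral_const_mul, MeasureTheory.integral_const_mul,
    boxCos d _ h1, boxCos d _ h2]
  ring

lemma int_sincos (d : ℕ) (m n : Fin d → ℤ) :
    ∫ x in box d, Real.sin (ip d x m) * Real.cos (ip d x n) = 0 := by
  have h : ∀ x : Fin d → ℝ, Real.sin (ip d x m) * Real.cos (ip d x n)
      = (1/2) * Real.sin (ip d x (m + n)) + (1/2) * Real.sin (ip d x (m - n)) := by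
    intro x; rw [ip_sub, ip_add, Real.sin_add, Real.sin_sub]; ring
  simp_rw [h]
  rw [MeasureTheory.integral_add
      ((contIntOn (continuous_const.fun_mul (sin_ip_cont d (m+n)))))
      ((contIntOn (continuous_const.fun_mul (sin_ip_cont d (m-n))))),
    MeasureTheory.integral_const_mul, MeasureTheory.integral_const_mul,
    boxSin d _, boxSin d _]
  ring

lemma int_cossin (d : ℕ) (m n : Fin d → ℤ) :
    ∫ x in box d, Real.cos (ip d x m) * Real.sin (ip d x n) = 0 := by
  have h : ∀ x : Fin d → ℝ, Real.cos (ip d x m) * Real.sin (ip d x n)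
      = (1/2) * Real.sin (ip d x (m + n)) - (1/2) * Real.sin (ip d x (m - n)) := by
    intro x; rw [ip_sub, ip_add, Real.sin_add, Real.sin_sub]; ring
  simp_rw [h]
  rw [MeasureTheory.integral_sub
      ((contIntOn (continuous_const.fun_mul (sin_ip_cont d (m+n)))))
      ((contIntOn (continuous_const.fun_mul (sin_ip_cont d (m-n))))),
    MeasureTheory.integral_const_mul, MeasureTheory.integral_const_mul,
    boxSin d _, boxSin d _]
  ring

/-- Main analytic lemma: every member of `SS d L` is orthogonal to `cos⟨·,n⟩`
and `sin⟨·,n⟩` provided `n ∉ L`, and the products are integrable. -/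
lemma ortho {d : ℕ} {L : Submodule ℤ (Fin d → ℤ)} {n : Fin d → ℤ} (hnL : n ∉ L)
    {g : (Fin d → ℝ) → ℝ} (hg : g ∈ SS d L) :
    IntegrableOn (fun x => g x * Real.cos (ip d x n)) (box d) ∧
    IntegrableOn (fun x => g x * Real.sin (ip d x n)) (box d) ∧
    (∫ x in box d, g x * Real.cos (ip d x n)) = 0 ∧
    (∫ x in box d, g x * Real.sin (ip d x n)) = 0 := by
  induction hg using Submodule.span_induction with
  | mem f hf =>
    obtain ⟨m, hm, hfm⟩ := hf
    have hsub : m - n ≠ 0 := fun h => hnL (by rw [show n = m from by linear_combination (norm := abel) -h]; exact hm)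
    have hadd : m + n ≠ 0 := fun h => hnL (by rw [show n = -m from by linear_combination (norm := abel) h]; exact neg_mem hm)
    rcases hfm with rfl | rfl
    · exact ⟨((cos_ip_cont d m).mul (cos_ip_cont d n)).integrableOn_Icc,
        ((cos_ip_cont d m).mul (sin_ip_cont d n)).integrableOn_Icc,
        int_coscos d m n hsub hadd, int_cossin d m n⟩
    · exact ⟨((sin_ip_cont d m).mul (cos_ip_cont d n)).integrableOn_Icc,
        ((sin_ip_cont d m).mul (sin_ip_cont d n)).integrableOn_Icc,
        int_sincos d m n, int_sinsin d m n hsub hadd⟩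
  | zero => simp
  | add f g hfm hgm hf hg =>
    obtain ⟨hf1, hf2, hf3, hf4⟩ := hf
    obtain ⟨hg1, hg2, hg3, hg4⟩ := hg
    have e1 : (fun x => (f + g) x * Real.cos (ip d x n))
        = fun x => f x * Real.cos (ip d x n) + g x * Real.cos (ip d x n) := by
      funext x; simp [add_mul]
    have e2 : (fun x => (f + g) x * Real.sin (ip d x n))
        = fun x => f x * Real.sin (ip d x n) + g x * Real.sin (ip d x n) := by
      funext x; simp [add_mul]
    refine ⟨e1 ▸ hf1.add hg1, e2 ▸ hf2.add hg2, ?_, ?_⟩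
    · rw [e1, MeasureTheory.integral_add hf1 hg1, hf3, hg3]; ring
    · rw [e2, MeasureTheory.integral_add hf2 hg2, hf4, hg4]; ring
  | smul a f hfm hf =>
    obtain ⟨hf1, hf2, hf3, hf4⟩ := hf
    have e1 : (fun x => (a • f) x * Real.cos (ip d x n))
        = fun x => a * (f x * Real.cos (ip d x n)) := by
      funext x; simp [mul_assoc]
    have e2 : (fun x => (a • f) x * Real.sin (ip d x n))
        = fun x => a * (f x * Real.sin (ip d x n)) := by
      funext x; simp [mul_assoc]
    refine ⟨e1 ▸ hf1.const_mul a, e2 ▸ hf2.const_mul a, ?_, ?_⟩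
    · rw [e1, MeasureTheory.integral_const_mul, hf3]; ring
    · rw [e2, MeasureTheory.integral_const_mul, hf4]; ring

/-! structural part -/

lemma HSeq_subset (d : ℕ) (I : Finset (Fin d → ℤ)) (j : ℕ) :
    HSeq d I j ⊆ SS d (Submodule.span ℤ (I : Set (Fin d → ℤ))) := by
  induction j with
  | zero =>
    show H0 d I ⊆ _
    rw [H0]
    intro g hg
    refine Submodule.span_le.mpr ?_ hg
    apply Set.union_subset
    · intro f hf
      rw [Set.mem_singleton_iff] at hf
      subst hf
      exact one_mem_SS
    · refine Set.iUnion₂_subset fun k hk => ?_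
      have hkL : k ∈ Submodule.span ℤ (I : Set (Fin d → ℤ)) := Submodule.subset_span hk
      intro f hf
      rcases hf with rfl | hf
      · exact cmap_mem hkL
      · rw [Set.mem_singleton_iff] at hf; subst hf
        exact smap_mem hkL
  | succ j ih =>
    intro g hg
    obtain ⟨⟨nn, _, θ₀, hθ₀, θ, hθ, hrep⟩, _⟩ := hg
    rw [hrep]
    exact sub_mem (ih hθ₀)
      (Submodule.sum_mem _ fun i _ => Bop_mem (ih (hθ i)))

lemma Hinf_subset (d : ℕ) (I : Finset (Fin d → ℤ)) {g : (Fin d → ℝ) → ℝ}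
    (hg : g ∈ Hinf d I) :
    g ∈ SS d (Submodule.span ℤ (I : Set (Fin d → ℤ))) := by
  obtain ⟨_, ⟨j, rfl⟩, hgj⟩ := hg
  exact HSeq_subset d I j hgj

/-! final assembly pieces -/

lemma ip_add_left (d : ℕ) (x y : Fin d → ℝ) (m : Fin d → ℤ) :
    ip d (x + y) m = ip d x m + ip d y m := by
  simp only [ip, Pi.add_apply, ← Finset.sum_add_distrib]
  exact Finset.sum_congr rfl fun j _ => by ring

lemma cos_ip_periodic (d : ℕ) (n : Fin d → ℤ) :
    Periodic2pi d (fun x => Real.cos (ip d x n)) := by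
  intro x k
  have h : ip d (fun j => 2 * Real.pi * (k j : ℝ)) n
      = ((∑ j, k j * n j : ℤ) : ℝ) * (2 * π) := by
    simp only [ip]
    push_cast
    rw [Finset.sum_mul]
    exact Finset.sum_congr rfl fun j _ => by ring
  show Real.cos (ip d (x + fun j => 2 * π * (k j : ℝ)) n) = Real.cos (ip d x n)
  rw [ip_add_left, h, Real.cos_add_int_mul_two_pi]

lemma volume_box (d : ℕ) : (volume (box d)).toReal = (2 * π) ^ d := by
  rw [box, Real.volume_Icc_pi]
  simp only [Pi.zero_apply, sub_zero]
  rw [Finset.prod_const, Finset.card_univ, Fintype.card_fin,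
    ← ENNReal.ofReal_pow (by positivity), ENNReal.toReal_ofReal (by positivity)]

lemma box_lt_top (d : ℕ) : volume (box d) < ⊤ := by
  rw [box]
  exact (isCompact_Icc).measure_lt_top

lemma int_cos_sq (d : ℕ) (n : Fin d → ℤ) (hn : n ≠ 0) :
    ∫ x in box d, Real.cos (ip d x n) * Real.cos (ip d x n)
      = (2 * π) ^ d / 2 := by
  have hnn : n + n ≠ 0 := by
    intro h; apply hn; funext j
    have h2 := congrFun h j
    simp only [Pi.add_apply, Pi.zero_apply] at h2 ⊢
    omega
  have h : ∀ x : Fin d → ℝ, Real.cos (ip d x n) * Real.cos (ip d x n)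
      = 1/2 + 1/2 * Real.cos (ip d x (n + n)) := by
    intro x
    have h2 : ip d x (n + n) = 2 * ip d x n := by rw [ip_add]; ring
    rw [h2, ← pow_two, Real.cos_sq]; ring
  simp_rw [h]
  rw [MeasureTheory.integral_add (by
      refine MeasureTheory.integrableOn_const (box_lt_top d).ne)
    (contIntOn (continuous_const.fun_mul (cos_ip_cont d (n+n)))),
    MeasureTheory.integral_const_mul, boxCos d _ hnn,
    MeasureTheory.setIntegral_const, MeasureTheory.measureReal_def, volume_box, smul_eq_mul]
  ring

/-- if n ∈ ℤ^d∖{0} is not a ℤ-linear combination of elements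
of I (i.e. I is not a generator), then every g ∈ H_∞(I) is orthogonal to
cos⟨·,n⟩ and sin⟨·,n⟩ on [0,2π]^d; in particular H_∞(I) is not uniformly
dense in the continuous (2πℤ^d)-periodic functions. -/
theorem stmt12 (d : ℕ) (hd : 1 ≤ d) (I : Finset (Fin d → ℤ)) (hI : ∀ k ∈ I, k ≠ 0)
    (n : Fin d → ℤ) (hn : n ≠ 0)
    (hng : ¬ ∃ a : (Fin d → ℤ) → ℤ, n = ∑ k ∈ I, a k • k) :
    (∀ g ∈ Hinf d I,
      (∫ x in Set.Icc (0 : Fin d → ℝ) (fun _ => 2 * Real.pi),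
        g x * Real.cos (ip d x n)) = 0 ∧
      (∫ x in Set.Icc (0 : Fin d → ℝ) (fun _ => 2 * Real.pi),
        g x * Real.sin (ip d x n)) = 0) ∧
    ¬ (∀ f : (Fin d → ℝ) → ℝ, Continuous f → Periodic2pi d f →
        ∀ ε : ℝ, 0 < ε → ∃ g ∈ Hinf d I, ∀ x : Fin d → ℝ, |f x - g x| < ε) := by
  have hnL : n ∉ Submodule.span ℤ (I : Set (Fin d → ℤ)) := by
    intro hmem
    obtain ⟨a, _, ha⟩ := Submodule.mem_span_finset.1 hmem
    exact hng ⟨a, ha.symm⟩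
  constructor
  · intro g hg
    have h := ortho hnL (Hinf_subset d I hg)
    exact ⟨h.2.2.1, h.2.2.2⟩
  · intro hdense
    obtain ⟨g, hgH, hga⟩ := hdense (fun x => Real.cos (ip d x n)) (cos_ip_cont d n)
      (cos_ip_periodic d n) (1/4) (by norm_num)
    have hg := ortho hnL (Hinf_subset d I hgH)
    have hint : ∫ x in box d, (Real.cos (ip d x n) - g x) * Real.cos (ip d x n)
        = (2*π)^d/2 := by
      simp_rw [sub_mul]
      rw [MeasureTheory.integral_sub
          (contIntOn ((cos_ip_cont d n).fun_mul (cos_ip_cont d n))) hg.1,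
        int_cos_sq d n hn, hg.2.2.1, sub_zero]
    have hbound : ‖∫ x in box d, (Real.cos (ip d x n) - g x) * Real.cos (ip d x n)‖
        ≤ (1/4) * (volume (box d)).toReal := by
      refine MeasureTheory.norm_setIntegral_le_of_norm_le_const (box_lt_top d)
        ?_
      intro x _
      rw [Real.norm_eq_abs, abs_mul]
      calc |Real.cos (ip d x n) - g x| * |Real.cos (ip d x n)|
          ≤ (1/4) * 1 := mul_le_mul (le_of_lt (hga x)) (Real.abs_cos_le_one _)
            (abs_nonneg _) (by norm_num)
        _ = 1/4 := by norm_num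
    rw [hint, volume_box, Real.norm_eq_abs, abs_of_pos (by positivity)] at hbound
    have hV : (0:ℝ) < (2*π)^d := by positivity
    linarith
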